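/- Let n ≥ 3, let m ≥ 1, and let Γ_m denote the principal congruence subgroup of level m in SL(n,ℤ), i.e., the kernel of the reduction homomorphism SL(n,ℤ) → SL(n,ℤ/mℤ). Then for every M ∈ SL(n,ℤ), the set of traces {tr(A·M) : A ∈ Γ_m} is infinite. -/

import Mathlib

open Matrix

lemma trace_stdBasis_mul {n : ℕ} (i j : Fin n) (c : ℤ) (M : Matrix (Fin n) (Fin n) ℤ) :
    Matrix.trace (Matrix.single i j c * M) = c * M j i := by
  rw [Matrix.trace]
  rw [Finset.sum_eq_single i]
  · simp [Matrix.diag, Matrix.single_mul_apply_same]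
  · intro b _ hb
    simp [Matrix.diag, Matrix.single_mul_apply_of_ne c i j b b hb]
  · simp

def tvSL (n : ℕ) (i j : Fin n) (hij : i ≠ j) (c : ℤ) :
    Matrix.SpecialLinearGroup (Fin n) ℤ :=
  ⟨Matrix.transvection i j c, by simp [Matrix.det_transvection_of_ne _ _ hij]⟩

@[simp] lemma tvSL_coe (n : ℕ) (i j : Fin n) (hij : i ≠ j) (c : ℤ) :
    (tvSL n i j hij c : Matrix (Fin n) (Fin n) ℤ) = Matrix.transvection i j c := rfl

lemma transvection_mem_ker (n m : ℕ) (i j : Fin n) (hij : i ≠ j) (c : ℤ) :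
    tvSL n i j hij ((m : ℤ) * c) ∈
      (Matrix.SpecialLinearGroup.map (n := Fin n) (Int.castRingHom (ZMod m))).ker := by
  rw [MonoidHom.mem_ker]
  apply Subtype.ext
  show (Matrix.transvection i j ((m : ℤ) * c)).map (Int.castRingHom (ZMod m)) =
    (1 : Matrix (Fin n) (Fin n) (ZMod m))
  ext a b
  rw [Matrix.transvection]
  simp only [Matrix.map_apply, Matrix.add_apply, Matrix.single, Matrix.one_apply,
    Matrix.of_apply]
  split_ifs with h1 h2 h2 <;>
    simp_all [Int.cast_mul, ZMod.natCast_self]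

theorem stmt14 (n m : ℕ) (hn : 3 ≤ n) (hm : 1 ≤ m)
    (M : Matrix.SpecialLinearGroup (Fin n) ℤ) :
    {t : ℤ | ∃ A ∈ (Matrix.SpecialLinearGroup.map (n := Fin n)
        (Int.castRingHom (ZMod m))).ker,
      Matrix.trace ((A : Matrix (Fin n) (Fin n) ℤ) *
        (M : Matrix (Fin n) (Fin n) ℤ)) = t}.Infinite := by
  have hm' : (m : ℤ) ≠ 0 := by exact_mod_cast Nat.one_le_iff_ne_zero.mp hm
  by_cases hoff : ∃ i j : Fin n, i ≠ j ∧ (M : Matrix (Fin n) (Fin n) ℤ) j i ≠ 0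
  · obtain ⟨i, j, hij, hMji⟩ := hoff
    refine Set.infinite_of_injective_forall_mem
      (f := fun k : ℤ => Matrix.trace ((M : Matrix (Fin n) (Fin n) ℤ)) +
        ((m : ℤ) * (M : Matrix (Fin n) (Fin n) ℤ) j i) * k) ?_ ?_
    · intro a b hab
      simp only at hab
      exact mul_left_cancel₀ (mul_ne_zero hm' hMji) (add_left_cancel hab)
    · intro k
      refine ⟨_, transvection_mem_ker n m i j hij k, ?_⟩
      rw [tvSL_coe]
      rw [Matrix.transvection, add_mul, Matrix.one_mul, Matrix.trace_add,
        trace_stdBasis_mul]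
      ring
  · push_neg at hoff
    set i : Fin n := ⟨0, by omega⟩ with hi
    set j : Fin n := ⟨1, by omega⟩ with hj
    have h01 : i ≠ j := by simp [hi, hj, Fin.ext_iff]
    have hMji : (M : Matrix (Fin n) (Fin n) ℤ) j i = 0 := hoff i j h01
    have hMij : (M : Matrix (Fin n) (Fin n) ℤ) i j = 0 := hoff j i (Ne.symm h01)
    have hMii : (M : Matrix (Fin n) (Fin n) ℤ) i i ≠ 0 := by
      intro h
      have hdiag : (M : Matrix (Fin n) (Fin n) ℤ) =
          Matrix.diagonal (fun k => (M : Matrix (Fin n) (Fin n) ℤ) k k) := by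
        ext a b
        by_cases hab : a = b
        · subst hab; simp
        · rw [Matrix.diagonal_apply_ne _ hab]
          exact hoff b a (Ne.symm hab)
      have hdet := M.2
      rw [hdiag, Matrix.det_diagonal] at hdet
      have hz : (∏ k, (M : Matrix (Fin n) (Fin n) ℤ) k k) = 0 :=
        Finset.prod_eq_zero (Finset.mem_univ i) h
      exact zero_ne_one (hz.symm.trans hdet)
    refine Set.infinite_of_injective_forall_mem
      (f := fun k : ℤ => Matrix.trace ((M : Matrix (Fin n) (Fin n) ℤ)) +
        ((m : ℤ) * (m : ℤ) * (M : Matrix (Fin n) (Fin n) ℤ) i i) * k) ?_ ?_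
    · intro a b hab
      simp only at hab
      exact mul_left_cancel₀ (mul_ne_zero (mul_ne_zero hm' hm') hMii) (add_left_cancel hab)
    · intro k
      refine ⟨tvSL n i j h01 ((m : ℤ) * 1) * tvSL n j i (Ne.symm h01) ((m : ℤ) * k),
        mul_mem (transvection_mem_ker n m i j h01 1)
          (transvection_mem_ker n m j i (Ne.symm h01) k), ?_⟩
      rw [Matrix.SpecialLinearGroup.coe_mul, tvSL_coe, tvSL_coe]
      rw [Matrix.transvection, Matrix.transvection, add_mul, mul_add, mul_add,
        Matrix.one_mul, Matrix.mul_one, Matrix.single_mul_single_same]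
      rw [add_mul, add_mul, add_mul, Matrix.one_mul, Matrix.trace_add, Matrix.trace_add,
        Matrix.trace_add, trace_stdBasis_mul, Matrix.one_mul, trace_stdBasis_mul,
        trace_stdBasis_mul, hMij, hMji]
      ring
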